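/- The function t ↦ log(cosh(√t)) is concave on the interval [0, ∞). -/

import Mathlib

open Real Set

/-- Auxiliary: `x ↦ sinh x / (x * cosh x)` has the expected derivative. -/
lemma hasDerivAt_aux (x : ℝ) (hx : 0 < x) :
    HasDerivAt (fun x => Real.sinh x / (x * Real.cosh x))
      ((x - Real.sinh x * Real.cosh x) / (x * Real.cosh x) ^ 2) x := by
  have hc := Real.cosh_pos x
  have hden : x * Real.cosh x ≠ 0 := by positivity
  have h1 : HasDerivAt (fun x => x * Real.cosh x) (1 * Real.cosh x + x * Real.sinh x) x :=
    (hasDerivAt_id x).mul (Real.hasDerivAt_cosh x)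
  have h2 := (Real.hasDerivAt_sinh x).div h1 hden
  refine h2.congr_deriv (Eq.symm ?_)
  have := Real.cosh_sq_sub_sinh_sq x
  field_simp
  ring_nf
  nlinarith [Real.cosh_sq_sub_sinh_sq x]

/-- `x ↦ tanh x / x` (written as `sinh x / (x * cosh x)`) is antitone on `(0, ∞)`. -/
lemma tanh_div_antitone :
    AntitoneOn (fun x => Real.sinh x / (x * Real.cosh x)) (Ioi (0 : ℝ)) := by
  have : interior (Ioi (0:ℝ)) = Ioi 0 := interior_Ioi
  apply antitoneOn_of_deriv_nonpos (convex_Ioi 0)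
  · apply ContinuousOn.div (Real.continuous_sinh.continuousOn)
      (continuous_id.mul Real.continuous_cosh).continuousOn
    intro x hx
    have : (0:ℝ) < x := hx
    have := Real.cosh_pos x
    exact mul_ne_zero (ne_of_gt hx) this.ne'
  · rw [this]
    intro x hx
    exact (hasDerivAt_aux x hx).differentiableAt.differentiableWithinAt
  · rw [this]
    intro x hx
    rw [(hasDerivAt_aux x hx).deriv]
    have hx' : (0:ℝ) < x := hx
    have hs : x ≤ Real.sinh x := (Real.self_lt_sinh_iff.mpr hx').le
    have hc : 1 ≤ Real.cosh x := Real.one_le_cosh x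
    have hsp : 0 < Real.sinh x := Real.sinh_pos_iff.mpr hx'
    have hnum : x - Real.sinh x * Real.cosh x ≤ 0 := by nlinarith
    have hden : (0:ℝ) < (x * Real.cosh x) ^ 2 := by
      have := Real.cosh_pos x; positivity
    exact div_nonpos_of_nonpos_of_nonneg hnum hden.le

/-- Derivative of `t ↦ log (cosh (√t))` for `t > 0`. -/
lemma hasDerivAt_f (t : ℝ) (ht : 0 < t) :
    HasDerivAt (fun t => Real.log (Real.cosh (Real.sqrt t)))
      ((1/2) * (Real.sinh (Real.sqrt t) / (Real.sqrt t * Real.cosh (Real.sqrt t)))) t := by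
  have hst : 0 < Real.sqrt t := Real.sqrt_pos.mpr ht
  have h1 : HasDerivAt Real.sqrt (1 / (2 * Real.sqrt t)) t := Real.hasDerivAt_sqrt ht.ne'
  have h2 : HasDerivAt Real.cosh (Real.sinh (Real.sqrt t)) (Real.sqrt t) :=
    Real.hasDerivAt_cosh _
  have h3 := (h2.comp t h1)
  have hc : Real.cosh (Real.sqrt t) ≠ 0 := (Real.cosh_pos _).ne'
  have h4 := h3.log hc
  have hst' : Real.sqrt t ≠ 0 := hst.ne'
  convert h4 using 1
  simp only [Function.comp_apply]
  field_simp
  exact (div_self hc).symm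

theorem log_cosh_sqrt_concave :
    ConcaveOn ℝ (Set.Ici (0 : ℝ)) (fun t => Real.log (Real.cosh (Real.sqrt t))) := by
  apply AntitoneOn.concaveOn_of_deriv (convex_Ici 0)
  · exact (Real.continuous_cosh.comp Real.continuous_sqrt).continuousOn.log
      (fun x _ => (Real.cosh_pos _).ne')
  · rw [interior_Ici]
    intro t ht
    exact (hasDerivAt_f t ht).differentiableAt.differentiableWithinAt
  · rw [interior_Ici]
    have hderiv : ∀ t ∈ Ioi (0:ℝ), deriv (fun t => Real.log (Real.cosh (Real.sqrt t))) t
        = (1/2) * (Real.sinh (Real.sqrt t) / (Real.sqrt t * Real.cosh (Real.sqrt t))) :=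
      fun t ht => (hasDerivAt_f t ht).deriv
    intro a ha b hb hab
    rw [hderiv a ha, hderiv b hb]
    have hsa : Real.sqrt a ∈ Ioi (0:ℝ) := Real.sqrt_pos.mpr ha
    have hsb : Real.sqrt b ∈ Ioi (0:ℝ) := Real.sqrt_pos.mpr hb
    have := tanh_div_antitone hsa hsb (Real.sqrt_le_sqrt hab)
    linarith
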